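/- Let β > 0 and let q be a real number with 0 < 2q < β. Then β + q ∈ D_β if and only if the closed disk {z ∈ ℂ : |z − β| ≤ q} is contained in D_β ∩ {z ∈ ℂ : 2 Re(z) > β}, where D_β = {z ∈ ℂ : |z² − βz| < β²/4}. Moreover β + q ∈ D_β if and only if −q ∈ D_β. -/

import Mathlib

/-- For `0 < 2q < β`, the point `β + q` lies in `D_β = {|z² - βz| < β²/4}` if and only if
the closed disk of center `β` and radius `q` is contained in the right lobe
`D_β ∩ {2 Re z > β}`; moreover `β + q ∈ D_β` iff `-q ∈ D_β`. -/
theorem disk_inclusion_right_lobe (β q : ℝ) (hβ : 0 < β) (hq : 0 < q) (h2q : 2 * q < β) :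
    (((β : ℂ) + q ∈ {z : ℂ | ‖z ^ 2 - (β : ℂ) * z‖ < β ^ 2 / 4}) ↔
      Metric.closedBall (β : ℂ) q ⊆
        {z : ℂ | ‖z ^ 2 - (β : ℂ) * z‖ < β ^ 2 / 4} ∩
          {z : ℂ | (β : ℝ) < 2 * z.re}) ∧
    (((β : ℂ) + q ∈ {z : ℂ | ‖z ^ 2 - (β : ℂ) * z‖ < β ^ 2 / 4}) ↔
      (-q : ℂ) ∈ {z : ℂ | ‖z ^ 2 - (β : ℂ) * z‖ < β ^ 2 / 4}) := by
  have key : ∀ z : ℂ, ‖z ^ 2 - (β : ℂ) * z‖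
      = ‖z‖ * ‖z - β‖ := by
    intro z
    rw [← norm_mul]
    congr 1
    ring
  have habs1 : ‖(β : ℂ) + q‖ = β + q := by
    rw [← Complex.ofReal_add, Complex.norm_real, Real.norm_eq_abs, abs_of_pos (by linarith)]
  have habs2 : ‖(β : ℂ) + q - β‖ = q := by
    have : (β : ℂ) + q - β = (q : ℂ) := by ring
    rw [this, Complex.norm_real, Real.norm_eq_abs, abs_of_pos hq]
  have hmem : ((β : ℂ) + q ∈ {z : ℂ | ‖z ^ 2 - (β : ℂ) * z‖ < β ^ 2 / 4})
      ↔ (β + q) * q < β ^ 2 / 4 := by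
    simp only [Set.mem_setOf_eq, key, habs1, habs2]
  constructor
  · rw [hmem]
    constructor
    · intro h z hz
      rw [Metric.mem_closedBall, Complex.dist_eq] at hz
      constructor
      · simp only [Set.mem_setOf_eq, key]
        have hzb : ‖z‖ ≤ β + q := by
          calc ‖z‖ = ‖(β : ℂ) + (z - β)‖ := by ring_nf
            _ ≤ ‖(β : ℂ)‖ + ‖z - β‖ := norm_add_le _ _
            _ ≤ β + q := by
                rw [Complex.norm_real, Real.norm_eq_abs, abs_of_pos hβ]; linarith
        calc ‖z‖ * ‖z - β‖ ≤ (β + q) * q := by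
              apply mul_le_mul hzb hz (norm_nonneg _) (by linarith)
          _ < β ^ 2 / 4 := h
      · simp only [Set.mem_setOf_eq]
        have hre : |(z - β).re| ≤ q := le_trans (Complex.abs_re_le_norm _) hz
        have : (z - (β : ℂ)).re = z.re - β := by simp
        rw [this] at hre
        have := abs_le.mp hre
        linarith [this.1]
    · intro h
      have : (β : ℂ) + q ∈ Metric.closedBall (β : ℂ) q := by
        rw [Metric.mem_closedBall, Complex.dist_eq]
        simp [habs2, abs_of_pos hq]
      have := (h this).1
      simp only [Set.mem_setOf_eq, key, habs1, habs2] at this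
      exact this
  · rw [hmem]
    have habs3 : ‖-(q : ℂ)‖ = q := by
      rw [norm_neg, Complex.norm_real, Real.norm_eq_abs, abs_of_pos hq]
    have habs4 : ‖-(q : ℂ) - β‖ = β + q := by
      have : -(q : ℂ) - β = -((β : ℝ) + q : ℝ) := by push_cast; ring
      rw [this, norm_neg, Complex.norm_real, Real.norm_eq_abs, abs_of_pos (by linarith)]
    simp only [Set.mem_setOf_eq, key, habs3, habs4]
    constructor <;> intro h <;> linarith [h]
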